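/- Let T be the tree metric on 5 taxa with exactly one internal edge, with cherry {1,2} on one side and leaves {3,4,5} on the other: for pendant weights e₁,…,e₅ > 0 and internal weight g > 0, set T(1,2)=e₁+e₂, T(i,j)=e_i+g+e_j for i∈{1,2} and j∈{3,4,5}, and T(i,j)=e_i+e_j for distinct i,j∈{3,4,5}. Then T is the tropical mixture of two star tree metrics on 5 taxa if and only if e₁ > g and e₂ > g. -/
import Mathlib


/-- A star tree metric on `n` taxa: a dissimilarity map of the form
`D(i,j) = e i + e j` for `i ≠ j` (and `D(i,i) = 0`) with all pendant weights positive. -/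
def IsStarTreeMetric {n : ℕ} (D : Fin n → Fin n → ℝ) : Prop :=
  ∃ e : Fin n → ℝ, (∀ i, 0 < e i) ∧ (∀ i, D i i = 0) ∧
    ∀ i j, i ≠ j → D i j = e i + e j

/-- `T` is the tropical mixture (pointwise maximum) of two star tree metrics. -/
def IsMixtureOfTwoStars {n : ℕ} (T : Fin n → Fin n → ℝ) : Prop :=
  ∃ D Dbar : Fin n → Fin n → ℝ, IsStarTreeMetric D ∧ IsStarTreeMetric Dbar ∧
    ∀ i j, T i j = max (D i j) (Dbar i j)

/-- The tree metric on 5 taxa with one internal edge of weight `g`, cherry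
`{1,2}` (indices `0,1`) on one side and leaves `{3,4,5}` (indices `2,3,4`) on
the other, with pendant weights `e`. -/
def fiveTaxaMetric (e : Fin 5 → ℝ) (g : ℝ) : Fin 5 → Fin 5 → ℝ :=
  fun i j => if i = j then 0
    else e i + e j + (if decide (i.val < 2) ≠ decide (j.val < 2) then g else 0)

lemma max_facts {x y c : ℝ} (h : max x y = c) :
    x ≤ c ∧ y ≤ c ∧ (x = c ∨ y = c) :=
  ⟨h ▸ le_max_left x y, h ▸ le_max_right x y, by
    rcases max_choice x y with h' | h'
    · left; rw [← h', h]
    · right; rw [← h', h]⟩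

theorem five_taxa_is_mixture_iff (e : Fin 5 → ℝ) (he : ∀ i, 0 < e i)
    (g : ℝ) (hg : 0 < g) :
    IsMixtureOfTwoStars (fiveTaxaMetric e g) ↔ (g < e 0 ∧ g < e 1) := by
  have vc : ∀ i j : Fin 5, i ≠ j → i.val < 2 → 2 ≤ j.val →
      fiveTaxaMetric e g i j = e i + e j + g := by
    intro i j hij hi hj
    rw [fiveTaxaMetric, if_neg hij, if_pos]
    simp only [ne_eq, decide_eq_decide]
    omega
  have vs : ∀ i j : Fin 5, i ≠ j → (decide (i.val < 2) = decide (j.val < 2)) →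
      fiveTaxaMetric e g i j = e i + e j := by
    intro i j hij h
    rw [fiveTaxaMetric, if_neg hij, if_neg (by simpa using h)]; ring
  constructor
  · rintro ⟨D, Db, ⟨a, hapos, _, hDa⟩, ⟨b, hbpos, _, hDb⟩, hmix⟩
    have key : ∀ i j : Fin 5, i ≠ j →
        max (a i + a j) (b i + b j) = fiveTaxaMetric e g i j := by
      intro i j h
      rw [← hDa i j h, ← hDb i j h, ← hmix]
    obtain ⟨-, -, d02⟩ := max_facts ((key 0 2 (by decide)).trans (vc 0 2 (by decide) (by decide) (by decide)))
    obtain ⟨-, -, d03⟩ := max_facts ((key 0 3 (by decide)).trans (vc 0 3 (by decide) (by decide) (by decide)))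
    obtain ⟨-, -, d04⟩ := max_facts ((key 0 4 (by decide)).trans (vc 0 4 (by decide) (by decide) (by decide)))
    obtain ⟨-, -, d12⟩ := max_facts ((key 1 2 (by decide)).trans (vc 1 2 (by decide) (by decide) (by decide)))
    obtain ⟨-, -, d13⟩ := max_facts ((key 1 3 (by decide)).trans (vc 1 3 (by decide) (by decide) (by decide)))
    obtain ⟨-, -, d14⟩ := max_facts ((key 1 4 (by decide)).trans (vc 1 4 (by decide) (by decide) (by decide)))
    obtain ⟨u23a, u23b, -⟩ := max_facts ((key 2 3 (by decide)).trans (vs 2 3 (by decide) (by decide)))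
    obtain ⟨u24a, u24b, -⟩ := max_facts ((key 2 4 (by decide)).trans (vs 2 4 (by decide) (by decide)))
    obtain ⟨u34a, u34b, -⟩ := max_facts ((key 3 4 (by decide)).trans (vs 3 4 (by decide) (by decide)))
    obtain ⟨u01a, u01b, -⟩ := max_facts ((key 0 1 (by decide)).trans (vs 0 1 (by decide) (by decide)))
    constructor
    · rcases d12 with c2 | c2 <;> rcases d13 with c3 | c3 <;> rcases d14 with c4 | c4 <;>
        linarith [hapos 0, hbpos 0]
    · rcases d02 with c2 | c2 <;> rcases d03 with c3 | c3 <;> rcases d04 with c4 | c4 <;>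
        linarith [hapos 1, hbpos 1]
  · rintro ⟨h0, h1⟩
    refine ⟨(fun i j => if i = j then 0 else
        (if i = 0 then e 0 + g else if i = 1 then e 1 - g else e i) +
        (if j = 0 then e 0 + g else if j = 1 then e 1 - g else e j)),
      (fun i j => if i = j then 0 else
        (if i = 0 then e 0 - g else if i = 1 then e 1 + g else e i) +
        (if j = 0 then e 0 - g else if j = 1 then e 1 + g else e j)),
      ⟨fun i => if i = 0 then e 0 + g else if i = 1 then e 1 - g else e i,
        ?_, fun i => if_pos rfl, fun i j h => if_neg h⟩,
      ⟨fun i => if i = 0 then e 0 - g else if i = 1 then e 1 + g else e i,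
        ?_, fun i => if_pos rfl, fun i j h => if_neg h⟩, ?_⟩
    · intro i; fin_cases i <;> simp <;> linarith [he 0, he 1, he 2, he 3, he 4]
    · intro i; fin_cases i <;> simp <;> linarith [he 0, he 1, he 2, he 3, he 4]
    · intro i j
      fin_cases i <;> fin_cases j <;>
        simp [fiveTaxaMetric] <;>
        first
          | (rw [max_eq_left (by linarith)]; ring)
          | (rw [max_eq_right (by linarith)]; ring)
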